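/- Let A, c₁, c₂ be reals with c₁ < c₂ ≤ A, and set θ = (c₂ − c₁)/(A − c₁). Let n ≥ 1 and let a_0, …, a_{n−1} be reals with a_i ≤ A for every i and ∑_{i=0}^{n−1} a_i ≥ c₂·n. Then there exist an integer l with l ≥ θ·n and integers 1 ≤ p_1 < ⋯ < p_l ≤ n such that for every 1 ≤ j ≤ l and every 1 ≤ k ≤ p_j, ∑_{s=p_j−k}^{p_j−1} a_s ≥ c₁·k. -/

import Mathlib

open Finset

/-- The Pliss lemma on the density of hyperbolic-like times for real sequences bounded
above (the key combinatorial tool behind Lemmas 2.1 and 2.2 of Gouëzel). -/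
theorem pliss_lemma
    (A c₁ c₂ : ℝ) (h12 : c₁ < c₂) (h2A : c₂ ≤ A)
    (n : ℕ) (hn : 1 ≤ n) (a : ℕ → ℝ) (ha : ∀ i < n, a i ≤ A)
    (hsum : c₂ * n ≤ ∑ i ∈ Finset.range n, a i) :
    ∃ l : ℕ, ((c₂ - c₁) / (A - c₁)) * n ≤ l ∧ ∃ p : ℕ → ℕ,
      StrictMonoOn p (Set.Icc 1 l) ∧
      (∀ j, 1 ≤ j → j ≤ l → 1 ≤ p j ∧ p j ≤ n) ∧
      ∀ j, 1 ≤ j → j ≤ l → ∀ k, 1 ≤ k → k ≤ p j →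
        c₁ * k ≤ ∑ s ∈ Finset.Ico (p j - k) (p j), a s := by
  classical
  have hA1 : c₁ < A := lt_of_lt_of_le h12 h2A
  set T : ℕ → ℝ := fun m => ∑ i ∈ range m, a i - c₁ * m with hT
  set E : Finset ℕ := (Finset.Icc 1 n).filter (fun p => ∀ m < p, T m ≤ T p) with hE
  set l := E.card with hl
  set M : ℕ → ℝ := fun m => (range (m+1)).sup' nonempty_range_add_one T with hM
  have hTM : ∀ m, T m ≤ M m := fun m => le_sup' T (self_mem_range_succ m)
  have hM0 : M 0 = 0 := by simp [hM, hT]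
  have hMsucc : ∀ m, M (m+1) = max (T (m+1)) (M m) := by
    intro m
    apply le_antisymm
    · apply Finset.sup'_le
      intro b hb
      have hb' : b ≤ m + 1 := Nat.lt_succ_iff.mp (Finset.mem_range.mp hb)
      rcases eq_or_lt_of_le hb' with h | h
      · subst h; exact le_max_left _ _
      · exact le_trans (le_sup' T (Finset.mem_range.mpr h)) (le_max_right _ _)
    · apply max_le
      · exact le_sup' T (self_mem_range_succ _)
      · apply Finset.sup'_le
        intro b hb
        exact le_sup' T (Finset.mem_range.mpr (by have := Finset.mem_range.mp hb; omega))
  have hMstep : ∀ m, m < n →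
      M (m+1) - M m ≤ (A - c₁) * (if m+1 ∈ E then (1:ℝ) else 0) := by
    intro m hm
    by_cases hrec : m+1 ∈ E
    · simp only [hrec, if_true, mul_one]
      have hstep : T (m+1) ≤ T m + (A - c₁) := by
        have := ha m hm
        simp only [hT, sum_range_succ]
        push_cast
        nlinarith [this]
      have h1 : T (m+1) ≤ M m + (A - c₁) := le_trans hstep (by linarith [hTM m])
      have h2 : M m ≤ M m + (A - c₁) := by linarith
      rw [hMsucc m]
      have := max_le h1 h2
      linarith
    · have hmem : m+1 ∈ Finset.Icc 1 n := by
        simp [Nat.succ_le_of_lt hm]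
      have : ¬ ∀ m' < m+1, T m' ≤ T (m+1) := by
        intro h
        exact hrec (Finset.mem_filter.mpr ⟨hmem, h⟩)
      push_neg at this
      obtain ⟨m', hm', hlt⟩ := this
      have hm'M : T m' ≤ M m := le_sup' T (Finset.mem_range.mpr (by omega))
      have : T (m+1) ≤ M m := le_of_lt (lt_of_lt_of_le hlt hm'M)
      rw [hMsucc m, max_eq_right this]
      simp [hrec]
  -- telescoping
  have htel : M n - M 0 = ∑ m ∈ range n, (M (m+1) - M m) :=
    (Finset.sum_range_sub M n).symm
  have hsum2 : ∑ m ∈ range n, (M (m+1) - M m)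
      ≤ ∑ m ∈ range n, (A - c₁) * (if m+1 ∈ E then (1:ℝ) else 0) := by
    apply Finset.sum_le_sum
    intro m hm
    exact hMstep m (Finset.mem_range.mp hm)
  have hcard : ∑ m ∈ range n, (if m+1 ∈ E then (1:ℝ) else 0) = (l : ℝ) := by
    rw [Finset.sum_boole]
    congr 1
    have himg : E = ((range n).filter (fun m => m+1 ∈ E)).image Nat.succ := by
      ext q
      simp only [Finset.mem_image, Finset.mem_filter, Finset.mem_range]
      constructor
      · intro hq
        have hq' := Finset.mem_filter.mp hq
        have := Finset.mem_Icc.mp hq'.1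
        exact ⟨q - 1, ⟨by omega, by rwa [show q - 1 + 1 = q by omega]⟩, by omega⟩
      · rintro ⟨m, ⟨_, hmE⟩, rfl⟩
        exact hmE
    conv_rhs => rw [hl, himg]
    rw [Finset.card_image_of_injective _ Nat.succ_injective]
  have hMn : (c₂ - c₁) * n ≤ M n := by
    have h1 : (c₂ - c₁) * n ≤ T n := by
      simp only [hT]
      nlinarith [hsum]
    exact le_trans h1 (hTM n)
  have key : (c₂ - c₁) * n ≤ (A - c₁) * l := by
    calc (c₂ - c₁) * n ≤ M n := hMn
      _ = M n - M 0 := by rw [hM0]; ring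
      _ = ∑ m ∈ range n, (M (m+1) - M m) := htel
      _ ≤ ∑ m ∈ range n, (A - c₁) * (if m+1 ∈ E then (1:ℝ) else 0) := hsum2
      _ = (A - c₁) * ∑ m ∈ range n, (if m+1 ∈ E then (1:ℝ) else 0) := by
          rw [Finset.mul_sum]
      _ = (A - c₁) * l := by rw [hcard]
  refine ⟨l, ?_, ?_⟩
  · rw [div_mul_eq_mul_div, div_le_iff₀ (by linarith)]
    nlinarith [key]
  · set e : Fin l ↪o ℕ := E.orderEmbOfFin rfl with he
    refine ⟨fun j => if h : j - 1 < l then (e ⟨j-1, h⟩ : ℕ) else 0, ?_, ?_, ?_⟩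
    · intro j hj j' hj' hlt
      simp only [Set.mem_Icc] at hj hj'
      obtain ⟨hj1, hjl⟩ := hj
      obtain ⟨hj'1, hj'l⟩ := hj'
      dsimp only
      rw [dif_pos (show j - 1 < l by omega), dif_pos (show j' - 1 < l by omega)]
      exact e.strictMono (by simp [Fin.mk_lt_mk]; omega)
    · intro j hj1 hjl
      dsimp only
      rw [dif_pos (show j - 1 < l by omega)]
      have hmem : (e ⟨j-1, show j - 1 < l by omega⟩ : ℕ) ∈ E := E.orderEmbOfFin_mem rfl _
      have := Finset.mem_Icc.mp (Finset.mem_filter.mp hmem).1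
      exact this
    · intro j hj1 hjl k hk1 hk2
      dsimp only at hk2 ⊢
      rw [dif_pos (show j - 1 < l by omega)] at hk2 ⊢
      set q : ℕ := (e ⟨j-1, show j - 1 < l by omega⟩ : ℕ) with hq
      have hmem : q ∈ E := E.orderEmbOfFin_mem rfl _
      have hrec := (Finset.mem_filter.mp hmem).2
      have hle : T (q - k) ≤ T q := hrec (q - k) (by omega)
      have hsub : ∑ s ∈ Finset.Ico (q - k) q, a s
          = ∑ i ∈ range q, a i - ∑ i ∈ range (q - k), a i := by
        rw [Finset.sum_Ico_eq_sub a (by omega)]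
      have hcast : ((q - k : ℕ) : ℝ) = (q : ℝ) - (k : ℝ) := by
        push_cast [Nat.cast_sub hk2]
        ring
      simp only [hT] at hle
      rw [hsub]
      rw [hcast] at hle
      nlinarith [hle]
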